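/- Let F be a field of characteristic not 2, let a ∈ F be a nonsquare, and let p, q ∈ F with q ≠ 0. If (x0, x1, x2, x3) ∈ F⁴ is not the zero tuple, then ((x0² − a·x1²) − p·(x2² − a·x3²))² − a·q²·(x2² − a·x3²)² ≠ 0. Equivalently, the 4×4 matrix with rows (x0, a·x1, p·x2 − a·q·x3, a·q·x2 − a·p·x3), (x1, x0, q·x2 − p·x3, p·x2 − a·q·x3), (x2, a·x3, x0, −a·x1), (x3, x2, −x1, x0) is invertible, so the 4×4 space-time block code obtained from the left regular representation of Cay(F(√a), p + q√a) over F is fully diverse. -/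

import Mathlib

lemma aniso_aux {F : Type*} [Field F] (a : F) (ha : ¬∃ y : F, y ^ 2 = a)
    (x y : F) (h : x ^ 2 - a * y ^ 2 = 0) : x = 0 ∧ y = 0 := by
  by_cases hy : y = 0
  · subst hy
    simp only [ne_eq, OfNat.ofNat_ne_zero, not_false_eq_true, zero_pow, mul_zero, sub_zero] at h
    exact ⟨pow_eq_zero_iff (n := 2) (by norm_num) |>.mp h, rfl⟩
  · exfalso
    exact ha ⟨x / y, by field_simp; linear_combination h⟩

/-- Let `F` be a field of characteristic not 2, `a ∈ F` a nonsquare, and `p, q ∈ F` with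
`q ≠ 0`. For every nonzero tuple `(x0,x1,x2,x3) ∈ F⁴` the quantity
`((x0² − a·x1²) − p·(x2² − a·x3²))² − a·q²·(x2² − a·x3²)²` is nonzero; equivalently, the
corresponding 4×4 left-regular-representation matrix of `Cay(F(√a), p + q√a)` is
invertible, so the associated 4×4 space-time block code is fully diverse. -/
theorem cay_four_by_four_fully_diverse {F : Type*} [Field F]
    (hchar : ringChar F ≠ 2)
    (a : F) (ha : ¬∃ y : F, y ^ 2 = a)
    (p q : F) (hq : q ≠ 0)
    (x0 x1 x2 x3 : F) (hx : (x0, x1, x2, x3) ≠ (0, 0, 0, 0)) :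
    ((x0 ^ 2 - a * x1 ^ 2) - p * (x2 ^ 2 - a * x3 ^ 2)) ^ 2 -
        a * q ^ 2 * (x2 ^ 2 - a * x3 ^ 2) ^ 2 ≠ 0 ∧
    IsUnit (!![x0, a * x1, p * x2 - a * q * x3, a * q * x2 - a * p * x3;
               x1, x0, q * x2 - p * x3, p * x2 - a * q * x3;
               x2, a * x3, x0, -(a * x1);
               x3, x2, -x1, x0]) := by
  have hE : ((x0 ^ 2 - a * x1 ^ 2) - p * (x2 ^ 2 - a * x3 ^ 2)) ^ 2 -
      a * q ^ 2 * (x2 ^ 2 - a * x3 ^ 2) ^ 2 ≠ 0 := by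
    intro hE
    set N1 := x0 ^ 2 - a * x1 ^ 2 with hN1
    set N2 := x2 ^ 2 - a * x3 ^ 2 with hN2
    by_cases h2 : N2 = 0
    · obtain ⟨h2a, h3a⟩ := aniso_aux a ha x2 x3 h2
      rw [h2] at hE
      have hN1z : N1 = 0 := by
        have : N1 ^ 2 = 0 := by linear_combination hE
        exact pow_eq_zero_iff (n := 2) (by norm_num) |>.mp this
      obtain ⟨h0a, h1a⟩ := aniso_aux a ha x0 x1 hN1z
      exact hx (by simp [h0a, h1a, h2a, h3a])
    · apply ha
      refine ⟨(N1 - p * N2) / (q * N2), ?_⟩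
      have hqN : q * N2 ≠ 0 := mul_ne_zero hq h2
      field_simp
      linear_combination hE
  refine ⟨hE, ?_⟩
  rw [Matrix.isUnit_iff_isUnit_det]
  rw [isUnit_iff_ne_zero]
  intro hdet
  apply hE
  rw [← hdet]
  rw [Matrix.det_succ_row_zero]
  simp [Fin.sum_univ_succ, Matrix.det_fin_three, Matrix.submatrix_apply, Fin.succAbove]
  ring
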